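/- Let α_d = Σ_{k+l=d} (3l)!·(3l)!·(k+l)! / (k! · (l!)^7) · (−36)^k for d ≥ 0, i.e. the Taylor coefficients of π(t) = Σ_{k,l≥0} (3l)!(3l)!(k+l)!/(k!(l!)^7) (−36)^k t^{k+l}. Then the coefficients satisfy the recurrence determined by the operator L = (36t+1)^4(693t−1) D^4 + 18t(36t+1)^3(13860t+61) D^3 + 9t(36t+1)^2(3492720t^2+57672t+77) D^2 + 144t(36t+1)(11226600t^3+377622t^2+2754t+1) D + 15552t^2(1796256t^3+98496t^2+1605t+7), i.e. L π = 0 as formal power series. -/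

import Mathlib

open scoped Nat
open PowerSeries

/-- The operator `D = t d/dt` on formal power series. -/
noncomputable def Dop : ℚ⟦X⟧ → ℚ⟦X⟧ := fun f => PowerSeries.mk fun n => (n : ℚ) * coeff n f

/-- `α_d = Σ_{k+l=d} (3l)!·(3l)!·(k+l)!/(k!·(l!)⁷)·(−36)^k`, the coefficients of the
regularized quantum period of a `(3,3)` complete intersection in `ℙ⁶`. -/
noncomputable def alpha33 (d : ℕ) : ℚ :=
  ∑ l ∈ Finset.range (d + 1),
    (((3 * l)! : ℚ) * ((3 * l)! : ℚ) * (((d - l) + l)! : ℚ))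
        / (((d - l)! : ℚ) * ((l ! : ℚ)) ^ 7) * (-36 : ℚ) ^ (d - l)


noncomputable def bb (k l : ℕ) : ℚ :=
  (((3 * l)! : ℚ) * ((3 * l)! : ℚ) * ((k + l)! : ℚ))
      / ((k ! : ℚ) * ((l ! : ℚ)) ^ 7) * (-36 : ℚ) ^ k

noncomputable def bz (k : ℤ) (l : ℕ) : ℚ := if 0 ≤ k then bb k.toNat l else 0

lemma bz_coe (k l : ℕ) : bz (k : ℤ) l = bb k l := by simp [bz]

lemma bz_neg {k : ℤ} (h : k < 0) (l : ℕ) : bz k l = 0 := by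
  simp [bz, not_le.mpr h]

lemma R1n (k l : ℕ) : ((k : ℚ) + 1) * bb (k + 1) l = -36 * ((k : ℚ) + l + 1) * bb k l := by
  unfold bb
  rw [show k + 1 + l = (k + l) + 1 by omega, Nat.factorial_succ (k + l), Nat.factorial_succ k]
  have hk : (k ! : ℚ) ≠ 0 := Nat.cast_ne_zero.mpr (Nat.factorial_ne_zero k)
  have hl : (l ! : ℚ) ≠ 0 := Nat.cast_ne_zero.mpr (Nat.factorial_ne_zero l)
  push_cast
  field_simp
  ring

lemma R2n (k l : ℕ) :
    ((l : ℚ) + 1) ^ 5 * bb k (l + 1)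
      = 9 * (3 * (l : ℚ) + 1) ^ 2 * (3 * (l : ℚ) + 2) ^ 2 * ((k : ℚ) + l + 1) * bb k l := by
  unfold bb
  rw [show 3 * (l + 1) = (3 * l + 2) + 1 by omega, Nat.factorial_succ,
    show 3 * l + 2 = (3 * l + 1) + 1 by omega, Nat.factorial_succ,
    show 3 * l + 1 = (3 * l) + 1 by omega, Nat.factorial_succ,
    show k + (l + 1) = (k + l) + 1 by omega, Nat.factorial_succ (k + l),
    Nat.factorial_succ l]
  have hk : (k ! : ℚ) ≠ 0 := Nat.cast_ne_zero.mpr (Nat.factorial_ne_zero k)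
  have hl : (l ! : ℚ) ≠ 0 := Nat.cast_ne_zero.mpr (Nat.factorial_ne_zero l)
  have h3 : ((3 * l)! : ℚ) ≠ 0 := Nat.cast_ne_zero.mpr (Nat.factorial_ne_zero _)
  push_cast
  field_simp
  ring

lemma R1 (k : ℤ) (l : ℕ) :
    ((k : ℚ) + 1) * bz (k + 1) l = -36 * ((k : ℚ) + l + 1) * bz k l := by
  rcases lt_trichotomy k (-1) with h | h | h
  · rw [bz_neg (by omega), bz_neg (by omega), mul_zero, mul_zero]
  · subst h
    rw [bz_neg (by omega : (-1 : ℤ) < 0)]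
    norm_num
  · have hk : 0 ≤ k := by omega
    lift k to ℕ using hk
    rw [show (k : ℤ) + 1 = ((k + 1 : ℕ) : ℤ) by push_cast; ring, bz_coe, bz_coe]
    have := R1n k l
    push_cast at this ⊢
    linear_combination this

lemma R2 (k : ℤ) (l : ℕ) :
    ((l : ℚ) + 1) ^ 5 * bz k (l + 1)
      = 9 * (3 * (l : ℚ) + 1) ^ 2 * (3 * (l : ℚ) + 2) ^ 2 * ((k : ℚ) + l + 1) * bz k l := by
  rcases lt_or_ge k 0 with h | h
  · rw [bz_neg h, bz_neg h, mul_zero, mul_zero]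
  · lift k to ℕ using h
    rw [bz_coe, bz_coe]
    have := R2n k l
    push_cast at this ⊢
    linear_combination this
lemma key (m l : ℕ) :
    ((m:ℚ)+5) * (-(((m:ℚ)+5)^4) * bz ((m:ℤ)+5-l) l + (549*((m:ℚ)+5)^4 - 1098*((m:ℚ)+5)^3 + 693*((m:ℚ)+5)^2 - 144*((m:ℚ)+5)) * bz ((m:ℤ)+4-l) l + (92016*((m:ℚ)+5)^4 - 368064*((m:ℚ)+5)^3 + 568944*((m:ℚ)+5)^2 - 401760*((m:ℚ)+5) + 108864) * bz ((m:ℤ)+3-l) l + (5202144*((m:ℚ)+5)^4 - 31212864*((m:ℚ)+5)^3 + 69704064*((m:ℚ)+5)^2 - 68654304*((m:ℚ)+5) + 24960960) * bz ((m:ℤ)+2-l) l + (127650816*((m:ℚ)+5)^4 - 1021206528*((m:ℚ)+5)^3 + 2935968768*((m:ℚ)+5)^2 - 3574222848*((m:ℚ)+5) + 1531809792) * bz ((m:ℤ)+1-l) l + (1163973888*((m:ℚ)+5)^4 - 11639738880*((m:ℚ)+5)^3 + 40739086080*((m:ℚ)+5)^2 - 58198694400*((m:ℚ)+5) + 27935373312)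 * bz ((m:ℤ)-l) l)
      = ((l:ℚ)+1)^5 * bz ((m:ℤ)+4-l) (l+1) - (l:ℚ)^5 * bz ((m:ℤ)+5-l) l := by
  have h0 := R1 ((m:ℤ)+4-l) l
  rw [show (m:ℤ)+4-l+1 = (m:ℤ)+5-l by ring] at h0
  have h1 := R1 ((m:ℤ)+3-l) l
  rw [show (m:ℤ)+3-l+1 = (m:ℤ)+4-l by ring] at h1
  have h2 := R1 ((m:ℤ)+2-l) l
  rw [show (m:ℤ)+2-l+1 = (m:ℤ)+3-l by ring] at h2
  have h3 := R1 ((m:ℤ)+1-l) l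
  rw [show (m:ℤ)+1-l+1 = (m:ℤ)+2-l by ring] at h3
  have h4 := R1 ((m:ℤ)-l) l
  rw [show (m:ℤ)-l+1 = (m:ℤ)+1-l by ring] at h4
  have hy := R2 ((m:ℤ)+4-l) l
  push_cast at h0 h1 h2 h3 h4 hy
  linear_combination (-(((m:ℚ)+5)^4 + ((m:ℚ)+5)^3*(l:ℚ) + ((m:ℚ)+5)^2*(l:ℚ)^2 + ((m:ℚ)+5)*(l:ℚ)^3 + (l:ℚ)^4)) * h0 + (36*((m:ℚ)+5) + 288*((m:ℚ)+5)*(l:ℚ) + 765*((m:ℚ)+5)*(l:ℚ)^2 + 693*((m:ℚ)+5)*(l:ℚ)^3 + 180*((m:ℚ)+5)^2 + 108*((m:ℚ)+5)^2*(l:ℚ) + 657*((m:ℚ)+5)^2*(l:ℚ)^2 - 513*((m:ℚ)+5)^3 + 621*((m:ℚ)+5)^3*(l:ℚ) + 585*((m:ℚ)+5)^4) * h1 + (-55080*((m:ℚ)+5) + 22356*((m:ℚ)+5)*(l:ℚ) - 24948*((m:ℚ)+5)*(l:ℚ)^2 + 170748*((m:ℚ)+5)^2 - 70956*((m:ℚ)+5)^2*(l:ℚ)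 + 24948*((m:ℚ)+5)^2*(l:ℚ)^2 - 186624*((m:ℚ)+5)^3 + 48600*((m:ℚ)+5)^3*(l:ℚ) + 70956*((m:ℚ)+5)^4) * h2 + (-6998400*((m:ℚ)+5) + 1796256*((m:ℚ)+5)*(l:ℚ) + 15793056*((m:ℚ)+5)^2 - 2694384*((m:ℚ)+5)^2*(l:ℚ) - 11442384*((m:ℚ)+5)^3 + 898128*((m:ℚ)+5)^3*(l:ℚ) + 2647728*((m:ℚ)+5)^4) * h3 + (-193995648*((m:ℚ)+5) + 355658688*((m:ℚ)+5)^2 - 193995648*((m:ℚ)+5)^3 + 32332608*((m:ℚ)+5)^4) * h4 - hy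

lemma alpha_bz (d N : ℕ) (h : d < N) :
    alpha33 d = ∑ l ∈ Finset.range N, bz ((d:ℤ)-l) l := by
  have h1 : alpha33 d = ∑ l ∈ Finset.range (d+1), bz ((d:ℤ)-l) l := by
    rw [alpha33]
    refine Finset.sum_congr rfl fun l hl => ?_
    simp only [Finset.mem_range] at hl
    rw [show (d:ℤ)-l = ((d-l : ℕ):ℤ) by omega, bz_coe, bb]
  rw [h1]
  refine Finset.sum_subset (Finset.range_subset_range.mpr (by omega)) fun l hl hnl => ?_
  simp only [Finset.mem_range] at hl hnl
  exact bz_neg (by omega) l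

lemma rec5 (m : ℕ) :
    -(((m:ℚ)+5)^4) * alpha33 (m+5) + (549*((m:ℚ)+5)^4 - 1098*((m:ℚ)+5)^3 + 693*((m:ℚ)+5)^2 - 144*((m:ℚ)+5)) * alpha33 (m+4) + (92016*((m:ℚ)+5)^4 - 368064*((m:ℚ)+5)^3 + 568944*((m:ℚ)+5)^2 - 401760*((m:ℚ)+5) + 108864) * alpha33 (m+3) + (5202144*((m:ℚ)+5)^4 - 31212864*((m:ℚ)+5)^3 + 69704064*((m:ℚ)+5)^2 - 68654304*((m:ℚ)+5) + 24960960) * alpha33 (m+2) + (127650816*((m:ℚ)+5)^4 - 1021206528*((m:ℚ)+5)^3 + 2935968768*((m:ℚ)+5)^2 - 3574222848*((m:ℚ)+5) + 1531809792) * alpha33 (m+1) + (1163973888*((m:ℚ)+5)^4 - 11639738880*((m:ℚ)+5)^3 + 40739086080*((m:ℚ)+5)^2 - 58198694400*((m:ℚ)+5) + 27935373312) * alpha33 m = 0 := by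
  have hne : ((m:ℚ)+5) ≠ 0 := by positivity
  refine (mul_eq_zero.mp ?_).resolve_left hne
  have e0 : alpha33 (m+5) = ∑ l ∈ Finset.range (m+6), bz ((m:ℤ)+5-l) l := by
    rw [alpha_bz (m+5) (m+6) (by omega)]
    refine Finset.sum_congr rfl fun l _ => ?_
    congr 1
  have e1 : alpha33 (m+4) = ∑ l ∈ Finset.range (m+6), bz ((m:ℤ)+4-l) l := by
    rw [alpha_bz (m+4) (m+6) (by omega)]
    refine Finset.sum_congr rfl fun l _ => ?_
    congr 1
  have e2 : alpha33 (m+3) = ∑ l ∈ Finset.range (m+6), bz ((m:ℤ)+3-l) l := by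
    rw [alpha_bz (m+3) (m+6) (by omega)]
    refine Finset.sum_congr rfl fun l _ => ?_
    congr 1
  have e3 : alpha33 (m+2) = ∑ l ∈ Finset.range (m+6), bz ((m:ℤ)+2-l) l := by
    rw [alpha_bz (m+2) (m+6) (by omega)]
    refine Finset.sum_congr rfl fun l _ => ?_
    congr 1
  have e4 : alpha33 (m+1) = ∑ l ∈ Finset.range (m+6), bz ((m:ℤ)+1-l) l := by
    rw [alpha_bz (m+1) (m+6) (by omega)]
    refine Finset.sum_congr rfl fun l _ => ?_
    congr 1
  have e5 : alpha33 m = ∑ l ∈ Finset.range (m+6), bz ((m:ℤ)-l) l :=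
    alpha_bz m (m+6) (by omega)
  rw [e0, e1, e2, e3, e4, e5]
  have lin : ((m:ℚ)+5) * (-(((m:ℚ)+5)^4) * (∑ l ∈ Finset.range (m+6), bz ((m:ℤ)+5-l) l) + (549*((m:ℚ)+5)^4 - 1098*((m:ℚ)+5)^3 + 693*((m:ℚ)+5)^2 - 144*((m:ℚ)+5)) * (∑ l ∈ Finset.range (m+6), bz ((m:ℤ)+4-l) l) + (92016*((m:ℚ)+5)^4 - 368064*((m:ℚ)+5)^3 + 568944*((m:ℚ)+5)^2 - 401760*((m:ℚ)+5) + 108864) * (∑ l ∈ Finset.range (m+6), bz ((m:ℤ)+3-l) l) + (5202144*((m:ℚ)+5)^4 - 31212864*((m:ℚ)+5)^3 + 69704064*((m:ℚ)+5)^2 - 68654304*((m:ℚ)+5) + 24960960) * (∑ l ∈ Finset.range (m+6), bz ((m:ℤ)+2-l) l) + (127650816*((m:ℚ)+5)^4 - 1021206528*((m:ℚ)+5)^3 + 2935968768*((m:ℚ)+5)^2 - 3574222848*((m:ℚ)+5) + 1531809792) * (∑ l ∈ Finset.range (m+6), bz ((m:ℤ)+1-l) l) + (1163973888*((m:ℚ)+5)^4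 - 11639738880*((m:ℚ)+5)^3 + 40739086080*((m:ℚ)+5)^2 - 58198694400*((m:ℚ)+5) + 27935373312) * (∑ l ∈ Finset.range (m+6), bz ((m:ℤ)-l) l))
      = ∑ l ∈ Finset.range (m+6), ((m:ℚ)+5) * (-(((m:ℚ)+5)^4) * bz ((m:ℤ)+5-l) l + (549*((m:ℚ)+5)^4 - 1098*((m:ℚ)+5)^3 + 693*((m:ℚ)+5)^2 - 144*((m:ℚ)+5)) * bz ((m:ℤ)+4-l) l + (92016*((m:ℚ)+5)^4 - 368064*((m:ℚ)+5)^3 + 568944*((m:ℚ)+5)^2 - 401760*((m:ℚ)+5) + 108864) * bz ((m:ℤ)+3-l) l + (5202144*((m:ℚ)+5)^4 - 31212864*((m:ℚ)+5)^3 + 69704064*((m:ℚ)+5)^2 - 68654304*((m:ℚ)+5) + 24960960) * bz ((m:ℤ)+2-l) l + (127650816*((m:ℚ)+5)^4 - 1021206528*((m:ℚ)+5)^3 + 2935968768*((m:ℚ)+5)^2 - 3574222848*((m:ℚ)+5) + 1531809792) * bz ((m:ℤ)+1-l) l + (1163973888*((m:ℚ)+5)^4 - 11639738880*((m:ℚ)+5)^3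 + 40739086080*((m:ℚ)+5)^2 - 58198694400*((m:ℚ)+5) + 27935373312) * bz ((m:ℤ)-l) l) := by
    simp only [Finset.mul_sum, mul_add, Finset.sum_add_distrib]
  rw [lin, Finset.sum_congr rfl fun l _ => key m l]
  have tele := Finset.sum_range_sub (fun j : ℕ => (j:ℚ)^5 * bz ((m:ℤ)+5-j) j) (m+6)
  have conv : ∑ l ∈ Finset.range (m+6), (((l:ℚ)+1)^5 * bz ((m:ℤ)+4-l) (l+1) - (l:ℚ)^5 * bz ((m:ℤ)+5-l) l)
      = ∑ l ∈ Finset.range (m+6), (((l+1 : ℕ):ℚ)^5 * bz ((m:ℤ)+5-((l+1:ℕ):ℤ)) (l+1) - (l:ℚ)^5 * bz ((m:ℤ)+5-l) l) := by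
    refine Finset.sum_congr rfl fun l _ => ?_
    rw [show (m:ℤ)+5-((l+1:ℕ):ℤ) = (m:ℤ)+4-l by push_cast; ring]
    push_cast
    ring
  rw [conv, tele, bz_neg (by omega), show (((0:ℕ)):ℚ)^5 = 0 by norm_num]
  ring

lemma expand (f0 f1 f2 f3 f4 : ℚ⟦X⟧) :
    (36 * X + 1) ^ 4 * (693 * X - 1) * f4
      + 18 * X * (36 * X + 1) ^ 3 * (13860 * X + 61) * f3
      + 9 * X * (36 * X + 1) ^ 2 * (3492720 * X ^ 2 + 57672 * X + 77) * f2
      + 144 * X * (36 * X + 1) * (11226600 * X ^ 3 + 377622 * X ^ 2 + 2754 * X + 1) * f1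
      + 15552 * X ^ 2 * (1796256 * X ^ 3 + 98496 * X ^ 2 + 1605 * X + 7) * f0
    = -f4 + (C 549 * f4) * X ^ 1 + (C 92016 * f4) * X ^ 2 + (C 5202144 * f4) * X ^ 3 + (C 127650816 * f4) * X ^ 4 + (C 1163973888 * f4) * X ^ 5 + (C 1098 * f3) * X ^ 1 + (C 368064 * f3) * X ^ 2 + (C 31212864 * f3) * X ^ 3 + (C 1021206528 * f3) * X ^ 4 + (C 11639738880 * f3) * X ^ 5 + (C 693 * f2) * X ^ 1 + (C 568944 * f2) * X ^ 2 + (C 69704064 * f2) * X ^ 3 + (C 2935968768 * f2) * X ^ 4 + (C 40739086080 * f2) * X ^ 5 + (C 144 * f1) * X ^ 1 + (C 401760 * f1) * X ^ 2 + (C 68654304 * f1) * X ^ 3 + (C 3574222848 * f1) * X ^ 4 + (C 58198694400 * f1) * X ^ 5 + (C 108864 * f0) * X ^ 2 + (C 24960960 * f0) * X ^ 3 + (C 1531809792 * f0) * X ^ 4 + (C 27935373312 * f0) * X ^ 5 := by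
  simp only [map_ofNat]
  ring

/-- `π(t) = Σ_d α_d t^d` is annihilated by the Picard–Fuchs operator
`L = (36t+1)⁴(693t−1) D⁴ + 18t(36t+1)³(13860t+61) D³
  + 9t(36t+1)²(3492720t²+57672t+77) D² + 144t(36t+1)(11226600t³+377622t²+2754t+1) D
  + 15552t²(1796256t³+98496t²+1605t+7)`. -/

theorem period33_satisfies_PF :
    (36 * X + 1) ^ 4 * (693 * X - 1) * Dop (Dop (Dop (Dop (PowerSeries.mk alpha33))))
      + 18 * X * (36 * X + 1) ^ 3 * (13860 * X + 61) * Dop (Dop (Dop (PowerSeries.mk alpha33)))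
      + 9 * X * (36 * X + 1) ^ 2 * (3492720 * X ^ 2 + 57672 * X + 77)
          * Dop (Dop (PowerSeries.mk alpha33))
      + 144 * X * (36 * X + 1) * (11226600 * X ^ 3 + 377622 * X ^ 2 + 2754 * X + 1)
          * Dop (PowerSeries.mk alpha33)
      + 15552 * X ^ 2 * (1796256 * X ^ 3 + 98496 * X ^ 2 + 1605 * X + 7)
          * PowerSeries.mk alpha33 = 0 := by
  rw [expand]
  ext n
  simp only [Dop, map_add, map_sub, map_neg, map_zero, PowerSeries.coeff_mul_X_pow',
    PowerSeries.coeff_C_mul, PowerSeries.coeff_mk]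
  rcases Nat.lt_or_ge n 5 with h | h
  · interval_cases n <;>
      norm_num [alpha33, Finset.sum_range_succ, Nat.factorial]
  · obtain ⟨m, rfl⟩ : ∃ m, n = m + 5 := ⟨n - 5, by omega⟩
    have h1 : (1:ℕ) ≤ m + 5 := by omega
    have h2 : (2:ℕ) ≤ m + 5 := by omega
    have h3 : (3:ℕ) ≤ m + 5 := by omega
    have h4 : (4:ℕ) ≤ m + 5 := by omega
    have h5 : (5:ℕ) ≤ m + 5 := by omega
    simp only [if_pos h1, if_pos h2, if_pos h3, if_pos h4, if_pos h5,
      show m+5-1 = m+4 from by omega, show m+5-2 = m+3 from by omega,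
      show m+5-3 = m+2 from by omega, show m+5-4 = m+1 from by omega,
      show m+5-5 = m from by omega]
    push_cast
    linear_combination rec5 m
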